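/- If U is a quasistandard sl(m,n)-tableau of shape μ ≤ λ, then push(pull^{λ-μ}(U)) = U; that is, the trivial pair of shape λ-μ is the largest trivial extractable pair of pull^{λ-μ}(U). -/

import Mathlib

/-- Membership in the (m,n)-hook diagram given by row lengths `R` (first `m` rows, 0-indexed)
and below-line column heights `C`: box (i,j) (0-indexed). -/
def memShape (m : ℕ) (R C : ℕ → ℕ) (i j : ℕ) : Prop :=
  (i < m ∧ j < R i) ∨ (m ≤ i ∧ i - m < C j)

instance (m : ℕ) (R C : ℕ → ℕ) (i j : ℕ) : Decidable (memShape m R C i j) := by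
  unfold memShape; infer_instance

/-- `(R, C)` is a valid (m,n)-hook shape: row lengths weakly decreasing, below-line column
heights weakly decreasing with at most n-1 nonzero ones, and the hook condition: every
below-line column sits under the last of the first m rows. -/
structure IsHookShape (m n : ℕ) (R C : ℕ → ℕ) : Prop where
  rmono : ∀ ⦃i i'⦄, i ≤ i' → i' < m → R i' ≤ R i
  rzero : ∀ i, m ≤ i → R i = 0
  cmono : ∀ ⦃j j'⦄, j ≤ j' → C j' ≤ C j
  czero : ∀ j, n - 1 ≤ j → C j = 0
  hook : ∀ j, 0 < C j → j < R (m - 1)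

/-- A filling `t` of the hook shape `(R, C)` is semistandard for sl(m,n): entries in
{1,…,m+n}, rows weakly increasing and strictly increasing once the entry exceeds m,
columns weakly increasing and strictly increasing while the entry is at most m. -/
structure IsSemistandard (m n : ℕ) (R C : ℕ → ℕ) (t : ℕ → ℕ → ℕ) : Prop where
  lb : ∀ i j, memShape m R C i j → 1 ≤ t i j
  ub : ∀ i j, memShape m R C i j → t i j ≤ m + n
  rowLe : ∀ i j, memShape m R C i (j+1) → t i j ≤ t i (j+1)
  rowLt : ∀ i j, memShape m R C i (j+1) → m < t i j → t i j < t i (j+1)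
  colLe : ∀ i j, memShape m R C (i+1) j → t i j ≤ t (i+1) j
  colLt : ∀ i j, memShape m R C (i+1) j → t i j ≤ m → t i j < t (i+1) j

/-- Row lengths after pushing row i left by B i steps. -/
def pushedR (R B : ℕ → ℕ) : ℕ → ℕ := fun i => R i - B i

/-- Below-line column heights after pushing column j up by B' j steps. -/
def pushedC (C B' : ℕ → ℕ) : ℕ → ℕ := fun j => C j - B' j

/-- The filling obtained by extracting a trivial pair: rows i < m pushed left by B i,
below-line columns pushed up by B' j. -/
def pushedT (m : ℕ) (t : ℕ → ℕ → ℕ) (B B' : ℕ → ℕ) : ℕ → ℕ → ℕ :=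
  fun i j => if i < m then t i (j + B i) else t (i + B' j) j

/-- The pair of trivial tableaux with row lengths `B` (above the line) and column heights
`B'` (below the line) is extractable from the semistandard filling `t` of shape `(R,C)`:
the corresponding top-left entries are trivial (t_{i,j} = i for the first B i boxes of row
i ≤ m, and t_{i,j} = m+j for the first B' j below-line boxes of column j), and extracting
it (pushing rows left and columns up) yields a valid hook shape (this encodes condition E3)
together with a semistandard filling (conditions E1, E2, E4). -/
structure IsTrivialExtractable (m n : ℕ) (R C : ℕ → ℕ) (t : ℕ → ℕ → ℕ) (B B' : ℕ → ℕ) :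
    Prop where
  ble : ∀ i, i < m → B i ≤ R i
  bzero : ∀ i, m ≤ i → B i = 0
  bmono : ∀ ⦃i i'⦄, i ≤ i' → i' < m → B i' ≤ B i
  b'le : ∀ j, B' j ≤ C j
  b'mono : ∀ ⦃j j'⦄, j ≤ j' → B' j' ≤ B' j
  trivTop : ∀ i, i < m → ∀ j, j < B i → t i j = i + 1
  trivBot : ∀ j k, k < B' j → t (m + k) j = m + j + 1
  pushShape : IsHookShape m n (pushedR R B) (pushedC C B')
  pushSS : IsSemistandard m n (pushedR R B) (pushedC C B') (pushedT m t B B')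

/-- A semistandard filling is quasistandard when its only trivial extractable pair is the
empty one. -/
def Quasistandard (m n : ℕ) (R C : ℕ → ℕ) (t : ℕ → ℕ → ℕ) : Prop :=
  ∀ B B', IsTrivialExtractable m n R C t B B' → (∀ i, B i = 0) ∧ (∀ j, B' j = 0)

/-- `(B, B')` is the largest trivial extractable pair of the filling `t` of shape `(R,C)`. -/
def GreatestExtractable (m n : ℕ) (R C : ℕ → ℕ) (t : ℕ → ℕ → ℕ) (B B' : ℕ → ℕ) : Prop :=
  IsTrivialExtractable m n R C t B B' ∧
    ∀ B₂ B₂', IsTrivialExtractable m n R C t B₂ B₂' →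
      (∀ i, B₂ i ≤ B i) ∧ (∀ j, B₂' j ≤ B' j)

/-- The ordering μ ≤ λ on shapes (componentwise on (a,a')), expressed on row lengths and
column heights: the differences R - R' and C - C' are nonnegative and weakly decreasing. -/
def ShapeLE (m : ℕ) (R' C' R C : ℕ → ℕ) : Prop :=
  (∀ i, R' i ≤ R i) ∧ (∀ ⦃i i'⦄, i ≤ i' → i' < m → R i' + R' i ≤ R i + R' i') ∧
  (∀ j, C' j ≤ C j) ∧ (∀ ⦃j j'⦄, j ≤ j' → C j' + C' j ≤ C j + C' j')

/-- pull^{λ-μ}(u): prepend to the filling `u` of shape μ = (R',C') the trivial pair of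
shape λ - μ: fill the first R i - R' i boxes of row i (i < m) with i, and the first
C j - C' j below-line boxes of column j with m+j. -/
def pullT (m : ℕ) (R C R' C' : ℕ → ℕ) (u : ℕ → ℕ → ℕ) : ℕ → ℕ → ℕ :=
  fun i j =>
    if i < m then
      (if j < R i - R' i then i + 1 else u i (j - (R i - R' i)))
    else
      (if i - m < C j - C' j then m + j + 1 else u (i - (C j - C' j)) j)

section Helpers

variable {m n : ℕ} {R C : ℕ → ℕ} {u : ℕ → ℕ → ℕ}

lemma mem_above {i j : ℕ} (h1 : i < m) (h2 : j < R i) : memShape m R C i j :=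
  Or.inl ⟨h1, h2⟩

lemma mem_below {i j : ℕ} (h1 : m ≤ i) (h2 : i - m < C j) : memShape m R C i j :=
  Or.inr ⟨h1, h2⟩

lemma mem_anti_row (hsh : IsHookShape m n R C) {i i' j : ℕ} (h : i' ≤ i)
    (hm : memShape m R C i j) : memShape m R C i' j := by
  rcases hm with ⟨h1, h2⟩ | ⟨h1, h2⟩
  · exact Or.inl ⟨lt_of_le_of_lt h h1, lt_of_lt_of_le h2 (hsh.rmono h h1)⟩
  · rcases Nat.lt_or_ge i' m with hi' | hi'
    · refine Or.inl ⟨hi', lt_of_lt_of_le (hsh.hook j (by omega)) (hsh.rmono (by omega) (by omega))⟩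
    · exact Or.inr ⟨hi', by omega⟩

lemma mem_anti_col (hsh : IsHookShape m n R C) {i j j' : ℕ} (h : j' ≤ j)
    (hm : memShape m R C i j) : memShape m R C i j' := by
  rcases hm with ⟨h1, h2⟩ | ⟨h1, h2⟩
  · exact Or.inl ⟨h1, by omega⟩
  · exact Or.inr ⟨h1, lt_of_lt_of_le h2 (hsh.cmono h)⟩

/-- T4: a small entry at (i,j) is at least i+1. -/
lemma entry_lb (hsh : IsHookShape m n R C) (hss : IsSemistandard m n R C u) :
    ∀ i j, memShape m R C i j → u i j ≤ m → i + 1 ≤ u i j := by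
  intro i
  induction i with
  | zero => intro j hm _; exact hss.lb 0 j hm
  | succ i ih =>
    intro j hm h
    have h1 := hss.colLe i j hm
    have hm' := mem_anti_row hsh (Nat.le_add_right i 1) hm
    have h2 := ih j hm' (le_trans h1 h)
    have h3 := hss.colLt i j hm (le_trans h1 h)
    omega

/-- Entries below the line exceed m. -/
lemma below_gt (hsh : IsHookShape m n R C) (hss : IsSemistandard m n R C u)
    {i j : ℕ} (hi : m ≤ i) (hm : memShape m R C i j) : m < u i j := by
  by_contra hc
  have := entry_lb hsh hss i j hm (by omega)
  omega

lemma colLeChain (hsh : IsHookShape m n R C) (hss : IsSemistandard m n R C u)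
    {i i' j : ℕ} (h : i ≤ i') (hm : memShape m R C i' j) : u i j ≤ u i' j := by
  induction i' with
  | zero => have : i = 0 := by omega
            subst this; rfl
  | succ k ih =>
    rcases Nat.lt_or_ge i (k+1) with hik | hik
    · exact le_trans (ih (by omega) (mem_anti_row hsh (Nat.le_succ k) hm)) (hss.colLe k j hm)
    · have : i = k + 1 := by omega
      subst this; rfl

lemma rowLeChain (hsh : IsHookShape m n R C) (hss : IsSemistandard m n R C u)
    {i j j' : ℕ} (h : j ≤ j') (hm : memShape m R C i j') : u i j ≤ u i j' := by
  induction j' with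
  | zero => have : j = 0 := by omega
            subst this; rfl
  | succ k ih =>
    rcases Nat.lt_or_ge j (k+1) with hjk | hjk
    · exact le_trans (ih (by omega) (mem_anti_col hsh (Nat.le_succ k) hm)) (hss.rowLe i k hm)
    · have : j = k + 1 := by omega
      subst this; rfl

/-- Strict column chain (valid while the top entry is small). -/
lemma colChainStrict (hsh : IsHookShape m n R C) (hss : IsSemistandard m n R C u)
    {i i' j : ℕ} (h : i ≤ i') (hm : memShape m R C i' j) (hsm : u i' j ≤ m) :
    u i j + (i' - i) ≤ u i' j := by
  induction i' with
  | zero => have : i = 0 := by omega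
            subst this; simp
  | succ k ih =>
    rcases Nat.lt_or_ge i (k+1) with hik | hik
    · have hm' := mem_anti_row hsh (Nat.le_succ k) hm
      have h1 := hss.colLe k j hm
      have h2 := hss.colLt k j hm (by omega)
      have h3 := ih (by omega) hm' (by omega)
      omega
    · have : i = k + 1 := by omega
      subst this; simp

/-- Strict row chain below the line. -/
lemma rowChainStrict (hsh : IsHookShape m n R C) (hss : IsSemistandard m n R C u)
    {i j j' : ℕ} (h : j ≤ j') (hi : m ≤ i) (hm : memShape m R C i j') :
    u i j + (j' - j) ≤ u i j' := by
  induction j' with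
  | zero => have : j = 0 := by omega
            subst this; simp
  | succ k ih =>
    rcases Nat.lt_or_ge j (k+1) with hjk | hjk
    · have hm' := mem_anti_col hsh (Nat.le_succ k) hm
      have h1 := below_gt hsh hss hi hm'
      have h2 := hss.rowLt i k hm h1
      have h3 := ih (by omega) hm'
      omega
    · have : j = k + 1 := by omega
      subst this; simp

/-- T3: entries below the line in column j are at least m+j+1. -/
lemma below_ge (hsh : IsHookShape m n R C) (hss : IsSemistandard m n R C u)
    {i j : ℕ} (hi : m ≤ i) (hm : memShape m R C i j) : m + j + 1 ≤ u i j := by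
  have h1 := rowChainStrict hsh hss (Nat.zero_le j) hi hm
  have h2 := below_gt hsh hss hi (mem_anti_col hsh (Nat.zero_le j) hm)
  omega

end Helpers


/-- If `u` is a quasistandard sl(m,n)-tableau of shape μ ≤ λ, then the trivial pair of
shape λ-μ is the largest trivial extractable pair of pull^{λ-μ}(u), and extracting it
gives back `u`: push(pull^{λ-μ}(u)) = u. -/
theorem push_pull_eq_self (m n : ℕ) (R C R' C' : ℕ → ℕ) (u : ℕ → ℕ → ℕ)
    (hlam : IsHookShape m n R C) (hmu : IsHookShape m n R' C')
    (hle : ShapeLE m R' C' R C) (hu : IsSemistandard m n R' C' u)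
    (hqs : Quasistandard m n R' C' u) :
    GreatestExtractable m n R C (pullT m R C R' C' u)
      (fun i => R i - R' i) (fun j => C j - C' j) ∧
    ∀ i j, pushedT m (pullT m R C R' C' u) (fun i => R i - R' i) (fun j => C j - C' j) i j
      = u i j := by
  obtain ⟨hle1, hle2, hle3, hle4⟩ := hle
  have hPP : ∀ i j, pushedT m (pullT m R C R' C' u)
      (fun i => R i - R' i) (fun j => C j - C' j) i j = u i j := by
    intro i j
    by_cases hi : i < m
    · simp only [pushedT, pullT, if_pos hi]
      rw [if_neg (by omega)]
      congr 1
      omega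
    · simp only [pushedT, pullT, if_neg hi]
      rw [if_neg (by omega), if_neg (by omega)]
      congr 1
      omega
  have hfR : pushedR R (fun i => R i - R' i) = R' := by
    funext i; simp only [pushedR]; have := hle1 i; omega
  have hfC : pushedC C (fun j => C j - C' j) = C' := by
    funext j; simp only [pushedC]; have := hle3 j; omega
  have hfT : pushedT m (pullT m R C R' C' u) (fun i => R i - R' i) (fun j => C j - C' j) = u :=
    funext fun i => funext fun j => hPP i j
  have hA : IsTrivialExtractable m n R C (pullT m R C R' C' u)
      (fun i => R i - R' i) (fun j => C j - C' j) := by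
    refine ⟨fun i _ => Nat.sub_le _ _, ?_, ?_, fun j => Nat.sub_le _ _, ?_, ?_, ?_, ?_, ?_⟩
    · intro i hi
      have := hlam.rzero i hi
      omega
    · intro i i' h h'
      have := hle2 h h'
      have := hle1 i
      have := hle1 i'
      omega
    · intro j j' h
      have := hle4 h
      have := hle3 j
      have := hle3 j'
      omega
    · intro i hi j hj
      simp only [pullT, if_pos hi, if_pos hj]
    · intro j k hk
      simp only [pullT]
      rw [if_neg (by omega), if_pos (by omega)]
    · rw [hfR, hfC]; exact hmu
    · rw [hfR, hfC, hfT]; exact hu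
  refine ⟨⟨hA, ?_⟩, hPP⟩
  intro B₂ B₂' hB₂
  -- Part 2: maximality
  have hb2le := hB₂.ble
  have hb2le' := hB₂.b'le
  have huB2 := hB₂.pushSS
  have hK1 : ∀ i, i < m → ∀ c, R i - R' i ≤ c →
      pullT m R C R' C' u i c = u i (c - (R i - R' i)) := by
    intro i hi c hc
    simp only [pullT, if_pos hi]
    rw [if_neg (by omega)]
  have hK2 : ∀ j s, m ≤ s → C j - C' j ≤ s - m →
      pullT m R C R' C' u s j = u (s - (C j - C' j)) j := by
    intro j s hs hc
    simp only [pullT]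
    rw [if_neg (by omega), if_neg (by omega)]
  have hTT : ∀ i, i < m → ∀ j, j < B₂ i - (R i - R' i) → u i j = i + 1 := by
    intro i hi j hj
    have h1 := hB₂.trivTop i hi (j + (R i - R' i)) (by omega)
    rw [hK1 i hi _ (by omega)] at h1
    rw [Nat.add_sub_cancel] at h1
    exact h1
  have hTB : ∀ j k, k < B₂' j - (C j - C' j) → u (m + k) j = m + j + 1 := by
    intro j k hk
    have h1 := hB₂.trivBot j (k + (C j - C' j)) (by omega)
    rw [hK2 j _ (by omega) (by omega)] at h1
    have he : m + (k + (C j - C' j)) - (C j - C' j) = m + k := by omega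
    rw [he] at h1
    exact h1
  obtain ⟨E, hEdef⟩ : ∃ E : ℕ → ℕ,
      E = fun i => (Finset.Ico i m).sup (fun k => B₂ k - (R k - R' k)) := ⟨_, rfl⟩
  obtain ⟨E', hE'def⟩ : ∃ E' : ℕ → ℕ,
      E' = fun j => (Finset.Ico j n).sup (fun k => B₂' k - (C k - C' k)) := ⟨_, rfl⟩
  have hEapp : ∀ i, E i = (Finset.Ico i m).sup (fun k => B₂ k - (R k - R' k)) := by
    rw [hEdef]; intro i; rfl
  have hE'app : ∀ j, E' j = (Finset.Ico j n).sup (fun k => B₂' k - (C k - C' k)) := by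
    rw [hE'def]; intro j; rfl
  have hDE : ∀ i, i < m → B₂ i - (R i - R' i) ≤ E i := by
    intro i hi
    rw [hEapp i]
    exact Finset.le_sup (f := fun k => B₂ k - (R k - R' k)) (Finset.mem_Ico.mpr ⟨le_rfl, hi⟩)
  have hDE' : ∀ j, j < n → B₂' j - (C j - C' j) ≤ E' j := by
    intro j hj
    rw [hE'app j]
    exact Finset.le_sup (f := fun k => B₂' k - (C k - C' k)) (Finset.mem_Ico.mpr ⟨le_rfl, hj⟩)
  have hD'all : ∀ j, B₂' j - (C j - C' j) ≤ E' j := by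
    intro j
    rcases lt_or_ge j n with hj | hj
    · exact hDE' j hj
    · have h1 := hb2le' j
      have h2 := hlam.czero j (by omega)
      omega
  have hEmono : ∀ i i', i ≤ i' → E i' ≤ E i := by
    intro i i' h
    rw [hEapp i, hEapp i']
    exact Finset.sup_mono (Finset.Ico_subset_Ico h le_rfl)
  have hE'mono : ∀ j j', j ≤ j' → E' j' ≤ E' j := by
    intro j j' h
    rw [hE'app j, hE'app j']
    exact Finset.sup_mono (Finset.Ico_subset_Ico h le_rfl)
  have hEle : ∀ i, i < m → E i ≤ R' i := by
    intro i hi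
    rw [hEapp i]
    refine Finset.sup_le ?_
    intro k hk
    rw [Finset.mem_Ico] at hk
    have h1 := hb2le k hk.2
    have h2 := hle1 k
    have h3 := hmu.rmono hk.1 hk.2
    omega
  have hE'le : ∀ j, E' j ≤ C' j := by
    intro j
    rw [hE'app j]
    refine Finset.sup_le ?_
    intro k hk
    rw [Finset.mem_Ico] at hk
    have h1 := hb2le' k
    have h2 := hle3 k
    have h3 := hmu.cmono hk.1
    omega
  have hEzero : ∀ i, m ≤ i → E i = 0 := by
    intro i hi
    rw [hEapp i, Finset.Ico_eq_empty (by omega)]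
    simp
  have hE'zero : ∀ j, n ≤ j → E' j = 0 := by
    intro j hj
    rw [hE'app j, Finset.Ico_eq_empty (by omega)]
    simp
  have hach : ∀ i, i < m → ∃ k, i ≤ k ∧ k < m ∧ E i = B₂ k - (R k - R' k) := by
    intro i hi
    obtain ⟨k, hk, he⟩ := Finset.exists_mem_eq_sup (Finset.Ico i m)
      ⟨i, Finset.mem_Ico.mpr ⟨le_rfl, hi⟩⟩ (fun k => B₂ k - (R k - R' k))
    rw [Finset.mem_Ico] at hk
    exact ⟨k, hk.1, hk.2, by rw [hEapp i]; exact he⟩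
  have hach' : ∀ j, E' j ≠ 0 → ∃ k, j ≤ k ∧ k < n ∧ E' j = B₂' k - (C k - C' k) := by
    intro j hne
    have hnem : (Finset.Ico j n).Nonempty := by
      by_contra hc
      rw [Finset.not_nonempty_iff_eq_empty] at hc
      apply hne
      rw [hE'app j, hc]
      simp
    obtain ⟨k, hk, he⟩ := Finset.exists_mem_eq_sup (Finset.Ico j n) hnem
      (fun k => B₂' k - (C k - C' k))
    rw [Finset.mem_Ico] at hk
    exact ⟨k, hk.1, hk.2, by rw [hE'app j]; exact he⟩
  have hTrivE : ∀ i, i < m → ∀ j, j < E i → u i j = i + 1 := by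
    intro i hi j hj
    obtain ⟨k, hik, hkm, hke⟩ := hach i hi
    have h1 : u k j = k + 1 := hTT k hkm j (by omega)
    have hjR : j < R' k := by
      have := hb2le k hkm
      have := hle1 k
      omega
    have hmk : memShape m R' C' k j := mem_above hkm hjR
    have h2 := colChainStrict hmu hu hik hmk (by omega)
    rw [h1] at h2
    have h3 := entry_lb hmu hu i j (mem_anti_row hmu hik hmk)
    omega
  have hTrivE' : ∀ j k, k < E' j → u (m + k) j = m + j + 1 := by
    intro j k hk
    obtain ⟨j₁, hjj, hj₁n, hj₁e⟩ := hach' j (by omega)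
    have h1 : u (m + k) j₁ = m + j₁ + 1 := hTB j₁ k (by omega)
    have hkC : k < C' j₁ := by
      have := hb2le' j₁
      have := hle3 j₁
      omega
    have hm1 : memShape m R' C' (m + k) j₁ := mem_below (by omega) (by omega)
    have h2 := rowChainStrict hmu hu hjj (by omega) hm1
    rw [h1] at h2
    have h3 := below_ge hmu hu (show m ≤ m + k by omega) (mem_anti_col hmu hjj hm1)
    omega
  have hrec : ∀ i, i < m → E i = max (B₂ i - (R i - R' i)) (E (i + 1)) := by
    intro i hi
    rw [hEapp i, hEapp (i + 1), ← Finset.insert_Ico_add_one_left_eq_Ico hi, Finset.sup_insert]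
  have hrec' : ∀ j, j < n → E' j = max (B₂' j - (C j - C' j)) (E' (j + 1)) := by
    intro j hj
    rw [hE'app j, hE'app (j + 1), ← Finset.insert_Ico_add_one_left_eq_Ico hj, Finset.sup_insert]
  have hadj : ∀ i, i + 1 < m → R' (i + 1) - E (i + 1) ≤ R' i - E i := by
    intro i him
    have h0 := hrec i (by omega)
    have h1 := hB₂.pushShape.rmono (Nat.le_add_right i 1) him
    simp only [pushedR] at h1
    have h2 := hle1 i
    have h3 := hle1 (i + 1)
    have h4 := hb2le i (by omega)
    have h5 := hb2le (i + 1) him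
    have h6 := hDE (i + 1) him
    have h7 := hmu.rmono (Nat.le_add_right i 1) him
    omega
  have hadj' : ∀ j, C' (j + 1) - E' (j + 1) ≤ C' j - E' j := by
    intro j
    rcases lt_or_ge j n with hj | hj
    · have h0 := hrec' j hj
      have h1 := hB₂.pushShape.cmono (Nat.le_add_right j 1)
      simp only [pushedC] at h1
      have h2 := hle3 j
      have h3 := hle3 (j + 1)
      have h4 := hb2le' j
      have h5 := hb2le' (j + 1)
      have h6 := hD'all (j + 1)
      have h7 := hmu.cmono (Nat.le_add_right j 1)
      omega
    · have h1 := hE'zero j hj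
      have h2 := hE'zero (j + 1) (by omega)
      have h3 := hmu.cmono (Nat.le_add_right j 1)
      omega
  have hEshR : ∀ i', i' < m → ∀ i, i ≤ i' → R' i' - E i' ≤ R' i - E i := by
    intro i'
    induction i' with
    | zero =>
      intro _ i hi
      have h : i = 0 := by omega
      rw [h]
    | succ k ih =>
      intro hk i hi
      rcases Nat.eq_or_lt_of_le hi with he | hlt
      · rw [he]
      · exact le_trans (hadj k hk) (ih (by omega) i (by omega))
  have hEshC : ∀ j' j, j ≤ j' → C' j' - E' j' ≤ C' j - E' j := by
    intro j'
    induction j' with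
    | zero =>
      intro j hj
      have h : j = 0 := by omega
      rw [h]
    | succ k ih =>
      intro j hj
      rcases Nat.eq_or_lt_of_le hj with he | hlt
      · rw [he]
      · exact le_trans (hadj' k) (ih j (by omega))
  have hEshape : IsHookShape m n (pushedR R' E) (pushedC C' E') := by
    refine ⟨?_, ?_, ?_, ?_, ?_⟩
    · intro i i' h h'
      simp only [pushedR]
      exact hEshR i' h' i h
    · intro i hi
      simp only [pushedR]
      have := hmu.rzero i hi
      omega
    · intro j j' h
      simp only [pushedC]
      exact hEshC j' j h
    · intro j hj
      simp only [pushedC]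
      have := hmu.czero j hj
      omega
    · intro j hj
      simp only [pushedC] at hj
      simp only [pushedR]
      have hC'pos : 0 < C' j := by omega
      have h0 := hmu.hook j hC'pos
      rcases Nat.eq_zero_or_pos (E (m - 1)) with h | h
      · omega
      · have hm0 : 0 < m := by
          rcases Nat.eq_zero_or_pos m with h' | h'
          · have := hEzero (m - 1) (by omega)
            omega
          · exact h'
        have hrm := hrec (m - 1) (by omega)
        have hEm := hEzero m le_rfl
        have h1 := hB₂.pushShape.hook j (by
          simp only [pushedC]
          have := hD'all j
          have := hle3 j
          have := hb2le' j
          omega)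
        simp only [pushedR] at h1
        have h2 := hle1 (m - 1)
        have h3 := hb2le (m - 1) (by omega)
        rw [show m - 1 + 1 = m by omega] at hrm
        omega
  have hvTop : ∀ i, i < m → R i - R' i ≤ B₂ i → ∀ j,
      pushedT m (pullT m R C R' C' u) B₂ B₂' i j = u i (j + (B₂ i - (R i - R' i))) := by
    intro i hi hab j
    simp only [pushedT, if_pos hi]
    rw [hK1 i hi _ (by omega)]
    have he : j + B₂ i - (R i - R' i) = j + (B₂ i - (R i - R' i)) := by omega
    rw [he]
  have hvBot : ∀ j, C j - C' j ≤ B₂' j → ∀ i, m ≤ i →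
      pushedT m (pullT m R C R' C' u) B₂ B₂' i j = u (i + (B₂' j - (C j - C' j))) j := by
    intro j hab i hi
    simp only [pushedT]
    rw [if_neg (by omega)]
    rw [hK2 j (i + B₂' j) (by omega) (by omega)]
    have he : i + B₂' j - (C j - C' j) = i + (B₂' j - (C j - C' j)) := by omega
    rw [he]
  have hardRow : ∀ i j, m ≤ i → E' (j + 1) < E' j → i - m < C' j - E' j →
      i - m < C' (j + 1) - E' (j + 1) →
      u (i + E' j) j < u (i + E' (j + 1)) (j + 1) := by
    intro i j hi hlt hm0 hm1
    obtain ⟨j₁, hjj, hj₁n, hj₁e⟩ := hach' j (by omega)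
    have hj₁ : j₁ = j := by
      by_contra hc
      have h1 : j + 1 ≤ j₁ := by omega
      have h2 : B₂' j₁ - (C j₁ - C' j₁) ≤ E' (j + 1) := by
        rw [hE'app (j + 1)]
        exact Finset.le_sup (f := fun k => B₂' k - (C k - C' k)) (Finset.mem_Ico.mpr ⟨h1, hj₁n⟩)
      omega
    rw [hj₁] at hj₁e
    have hv1 := hvBot j (by omega) i hi
    have hv1' : pushedT m (pullT m R C R' C' u) B₂ B₂' i j = u (i + E' j) j := by
      rw [hv1]
      have he : i + (B₂' j - (C j - C' j)) = i + E' j := by omega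
      rw [he]
    have hmv : memShape m (pushedR R B₂) (pushedC C B₂') i (j + 1) := by
      refine mem_below hi ?_
      simp only [pushedC]
      have := hD'all (j + 1)
      have := hle3 (j + 1)
      have := hb2le' (j + 1)
      omega
    have hgt : m < u (i + E' j) j :=
      below_gt hmu hu (by omega) (mem_below (by omega) (by omega))
    have h2 := huB2.rowLt i j hmv (by rw [hv1']; exact hgt)
    rw [hv1'] at h2
    by_cases hc : i + B₂' (j + 1) - m < C (j + 1) - C' (j + 1)
    · have hval : pushedT m (pullT m R C R' C' u) B₂ B₂' i (j + 1) = m + (j + 1) + 1 := by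
        simp only [pushedT]
        rw [if_neg (by omega)]
        simp only [pullT]
        rw [if_neg (by omega), if_pos hc]
      rw [hval] at h2
      have h3 := below_ge hmu hu (show m ≤ i + E' (j + 1) by omega)
        (mem_below (by omega) (by omega) : memShape m R' C' (i + E' (j + 1)) (j + 1))
      omega
    · have hval : pushedT m (pullT m R C R' C' u) B₂ B₂' i (j + 1)
          = u (i + B₂' (j + 1) - (C (j + 1) - C' (j + 1))) (j + 1) := by
        simp only [pushedT]
        rw [if_neg (by omega)]
        exact hK2 (j + 1) (i + B₂' (j + 1)) (by omega) (by omega)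
      rw [hval] at h2
      have hr : i + B₂' (j + 1) - (C (j + 1) - C' (j + 1)) ≤ i + E' (j + 1) := by
        have := hD'all (j + 1)
        omega
      have h4 := colLeChain hmu hu hr (mem_below (by omega) (by omega) :
        memShape m R' C' (i + E' (j + 1)) (j + 1))
      omega
  have hardCol : ∀ i j, i + 1 < m → E (i + 1) < E i → j < R' (i + 1) - E (i + 1) →
      (u i (j + E i) ≤ u (i + 1) (j + E (i + 1))) ∧
      (u i (j + E i) ≤ m → u i (j + E i) < u (i + 1) (j + E (i + 1))) := by
    intro i j him hlt hjm
    obtain ⟨k, hik, hkm, hke⟩ := hach i (by omega)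
    have hki : k = i := by
      by_contra hc
      have h1 : i + 1 ≤ k := by omega
      have h2 : B₂ k - (R k - R' k) ≤ E (i + 1) := by
        rw [hEapp (i + 1)]
        exact Finset.le_sup (f := fun k => B₂ k - (R k - R' k)) (Finset.mem_Ico.mpr ⟨h1, hkm⟩)
      omega
    rw [hki] at hke
    have hv1 := hvTop i (by omega) (by omega) j
    have hv1' : pushedT m (pullT m R C R' C' u) B₂ B₂' i j = u i (j + E i) := by
      rw [hv1]
      have he : j + (B₂ i - (R i - R' i)) = j + E i := by omega
      rw [he]
    have hmv : memShape m (pushedR R B₂) (pushedC C B₂') (i + 1) j := by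
      refine mem_above him ?_
      simp only [pushedR]
      have := hDE (i + 1) him
      have := hle1 (i + 1)
      have := hb2le (i + 1) him
      omega
    have hstep := huB2.colLe i j hmv
    rw [hv1'] at hstep
    have hRHS : pushedT m (pullT m R C R' C' u) B₂ B₂' (i + 1) j
        ≤ u (i + 1) (j + E (i + 1)) := by
      by_cases hc : j + B₂ (i + 1) < R (i + 1) - R' (i + 1)
      · have hval : pushedT m (pullT m R C R' C' u) B₂ B₂' (i + 1) j = i + 1 + 1 := by
          simp only [pushedT]
          rw [if_pos him]
          simp only [pullT]
          rw [if_pos him, if_pos hc]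
        rw [hval]
        have hmem : memShape m R' C' (i + 1) (j + E (i + 1)) := mem_above him (by omega)
        rcases le_or_gt (u (i + 1) (j + E (i + 1))) m with hsm | hbg
        · exact entry_lb hmu hu _ _ hmem hsm
        · omega
      · have hval : pushedT m (pullT m R C R' C' u) B₂ B₂' (i + 1) j
            = u (i + 1) (j + B₂ (i + 1) - (R (i + 1) - R' (i + 1))) := by
          simp only [pushedT]
          rw [if_pos him]
          exact hK1 (i + 1) him _ (by omega)
        rw [hval]
        refine rowLeChain hmu hu ?_ (mem_above him (by omega))
        have := hDE (i + 1) him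
        omega
    refine ⟨le_trans hstep hRHS, ?_⟩
    intro hsm
    have hstep2 := huB2.colLt i j hmv (by rw [hv1']; exact hsm)
    rw [hv1'] at hstep2
    omega
  have hardCross : ∀ i j, i + 1 = m → 0 < C' j - E' j →
      (u i (j + E i) ≤ u (i + 1 + E' j) j) ∧
      (u i (j + E i) ≤ m → u i (j + E i) < u (i + 1 + E' j) j) := by
    intro i j him hcp
    have hidx : i + 1 + E' j = m + E' j := by omega
    rw [hidx]
    have hRmem : memShape m R' C' (m + E' j) j := mem_below (by omega) (by omega)
    rcases Nat.eq_zero_or_pos (E i) with hp | hp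
    · rw [hp, Nat.add_zero]
      have hmem1 : memShape m R' C' (i + 1) j := by
        rw [him]
        exact mem_below le_rfl (by omega)
      have h1 := hu.colLe i j hmem1
      have h2 : u (i + 1) j ≤ u (m + E' j) j := by
        rw [him]
        exact colLeChain hmu hu (by omega) hRmem
      refine ⟨by omega, ?_⟩
      intro hsm
      have h3 := hu.colLt i j hmem1 hsm
      omega
    · obtain ⟨k, hik, hkm, hke⟩ := hach i (by omega)
      have hki : k = i := by omega
      rw [hki] at hke
      have hv1 := hvTop i (by omega) (by omega) j
      have hv1' : pushedT m (pullT m R C R' C' u) B₂ B₂' i j = u i (j + E i) := by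
        rw [hv1]
        have he : j + (B₂ i - (R i - R' i)) = j + E i := by omega
        rw [he]
      have hmv : memShape m (pushedR R B₂) (pushedC C B₂') (i + 1) j := by
        refine mem_below (by omega) ?_
        simp only [pushedC]
        have := hD'all j
        have := hle3 j
        have := hb2le' j
        omega
      have hstep := huB2.colLe i j hmv
      rw [hv1'] at hstep
      have hRHS : pushedT m (pullT m R C R' C' u) B₂ B₂' (i + 1) j ≤ u (m + E' j) j := by
        by_cases hc : i + 1 + B₂' j - m < C j - C' j
        · have hval : pushedT m (pullT m R C R' C' u) B₂ B₂' (i + 1) j = m + j + 1 := by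
            simp only [pushedT]
            rw [if_neg (by omega)]
            simp only [pullT]
            rw [if_neg (by omega), if_pos hc]
          rw [hval]
          exact below_ge hmu hu (by omega) hRmem
        · have hval : pushedT m (pullT m R C R' C' u) B₂ B₂' (i + 1) j
              = u (i + 1 + B₂' j - (C j - C' j)) j := by
            simp only [pushedT]
            rw [if_neg (by omega)]
            exact hK2 j (i + 1 + B₂' j) (by omega) (by omega)
          rw [hval]
          refine colLeChain hmu hu ?_ hRmem
          have := hD'all j
          omega
      refine ⟨le_trans hstep hRHS, ?_⟩
      intro hsm
      have hstep2 := huB2.colLt i j hmv (by rw [hv1']; exact hsm)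
      rw [hv1'] at hstep2
      omega
  have hEss : IsSemistandard m n (pushedR R' E) (pushedC C' E') (pushedT m u E E') := by
    refine ⟨?_, ?_, ?_, ?_, ?_, ?_⟩
    · intro i j hm
      simp only [memShape, pushedR, pushedC] at hm
      simp only [pushedT]
      by_cases hi : i < m
      · simp only [if_pos hi]
        rcases hm with ⟨h1, h2⟩ | ⟨h1, h2⟩
        · exact hu.lb _ _ (mem_above hi (by omega))
        · omega
      · simp only [if_neg hi]
        rcases hm with ⟨h1, h2⟩ | ⟨h1, h2⟩
        · omega
        · exact hu.lb _ _ (mem_below (by omega) (by omega))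
    · intro i j hm
      simp only [memShape, pushedR, pushedC] at hm
      simp only [pushedT]
      by_cases hi : i < m
      · simp only [if_pos hi]
        rcases hm with ⟨h1, h2⟩ | ⟨h1, h2⟩
        · exact hu.ub _ _ (mem_above hi (by omega))
        · omega
      · simp only [if_neg hi]
        rcases hm with ⟨h1, h2⟩ | ⟨h1, h2⟩
        · omega
        · exact hu.ub _ _ (mem_below (by omega) (by omega))
    · intro i j hm
      simp only [memShape, pushedR, pushedC] at hm
      simp only [pushedT]
      by_cases hi : i < m
      · simp only [if_pos hi]
        rcases hm with ⟨h1, h2⟩ | ⟨h1, h2⟩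
        · have he : j + 1 + E i = (j + E i) + 1 := by omega
          rw [he]
          exact hu.rowLe i (j + E i) (mem_above hi (by omega))
        · omega
      · simp only [if_neg hi]
        rcases hm with ⟨h1, h2⟩ | ⟨h1, h2⟩
        · omega
        · have hba := hE'mono j (j + 1) (Nat.le_add_right j 1)
          rcases Nat.eq_or_lt_of_le hba with heq | hslt
          · rw [← heq]
            exact hu.rowLe (i + E' (j + 1)) j (mem_below (by omega) (by omega))
          · have hx := hadj' j
            exact le_of_lt (hardRow i j (by omega) hslt (by omega) (by omega))
    · intro i j hm hgt
      simp only [memShape, pushedR, pushedC] at hm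
      simp only [pushedT] at hgt ⊢
      by_cases hi : i < m
      · simp only [if_pos hi] at hgt ⊢
        rcases hm with ⟨h1, h2⟩ | ⟨h1, h2⟩
        · have he : j + 1 + E i = (j + E i) + 1 := by omega
          rw [he]
          exact hu.rowLt i (j + E i) (mem_above hi (by omega)) hgt
        · omega
      · simp only [if_neg hi] at hgt ⊢
        rcases hm with ⟨h1, h2⟩ | ⟨h1, h2⟩
        · omega
        · have hba := hE'mono j (j + 1) (Nat.le_add_right j 1)
          rcases Nat.eq_or_lt_of_le hba with heq | hslt
          · rw [← heq] at hgt ⊢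
            exact hu.rowLt (i + E' (j + 1)) j (mem_below (by omega) (by omega)) hgt
          · have hx := hadj' j
            exact hardRow i j (by omega) hslt (by omega) (by omega)
    · intro i j hm
      simp only [memShape, pushedR, pushedC] at hm
      simp only [pushedT]
      by_cases hi1 : i + 1 < m
      · have hi : i < m := by omega
        simp only [if_pos hi, if_pos hi1]
        rcases hm with ⟨h1, h2⟩ | ⟨h1, h2⟩
        · have hpq := hEmono i (i + 1) (Nat.le_add_right i 1)
          rcases Nat.eq_or_lt_of_le hpq with heq | hslt
          · rw [← heq]
            exact hu.colLe i (j + E (i + 1)) (mem_above hi1 (by omega))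
          · exact (hardCol i j hi1 hslt (by omega)).1
        · omega
      · by_cases hi : i < m
        · have him : i + 1 = m := by omega
          simp only [if_pos hi, if_neg hi1]
          rcases hm with ⟨h1, h2⟩ | ⟨h1, h2⟩
          · omega
          · exact (hardCross i j him (by omega)).1
        · simp only [if_neg hi, if_neg hi1]
          rcases hm with ⟨h1, h2⟩ | ⟨h1, h2⟩
          · omega
          · have he : i + 1 + E' j = (i + E' j) + 1 := by omega
            rw [he]
            exact hu.colLe (i + E' j) j (mem_below (by omega) (by omega))
    · intro i j hm hsm
      simp only [memShape, pushedR, pushedC] at hm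
      simp only [pushedT] at hsm ⊢
      by_cases hi1 : i + 1 < m
      · have hi : i < m := by omega
        simp only [if_pos hi] at hsm
        simp only [if_pos hi, if_pos hi1]
        rcases hm with ⟨h1, h2⟩ | ⟨h1, h2⟩
        · have hpq := hEmono i (i + 1) (Nat.le_add_right i 1)
          rcases Nat.eq_or_lt_of_le hpq with heq | hslt
          · rw [← heq] at hsm ⊢
            exact hu.colLt i (j + E (i + 1)) (mem_above hi1 (by omega)) hsm
          · exact (hardCol i j hi1 hslt (by omega)).2 hsm
        · omega
      · by_cases hi : i < m
        · have him : i + 1 = m := by omega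
          simp only [if_pos hi] at hsm
          simp only [if_pos hi, if_neg hi1]
          rcases hm with ⟨h1, h2⟩ | ⟨h1, h2⟩
          · omega
          · exact (hardCross i j him (by omega)).2 hsm
        · simp only [if_neg hi] at hsm
          rcases hm with ⟨h1, h2⟩ | ⟨h1, h2⟩
          · omega
          · have hgt := below_gt hmu hu (show m ≤ i + E' j by omega)
              (mem_below (by omega) (by omega) : memShape m R' C' (i + E' j) j)
            exact absurd hsm (by omega)
  have hE : IsTrivialExtractable m n R' C' u E E' :=
    ⟨fun i hi => hEle i hi, hEzero, fun i i' h _ => hEmono i i' h, hE'le,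
      fun j j' h => hE'mono j j' h, hTrivE, hTrivE', hEshape, hEss⟩
  obtain ⟨hz, hz'⟩ := hqs E E' hE
  constructor
  · intro i
    show B₂ i ≤ R i - R' i
    rcases lt_or_ge i m with hi | hi
    · have h1 := hDE i hi
      have h2 := hz i
      omega
    · have h1 := hB₂.bzero i hi
      omega
  · intro j
    show B₂' j ≤ C j - C' j
    have h1 := hD'all j
    have h2 := hz' j
    omega
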